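/- For every x ∈ ℝ^d and every t > 0, the set I(x,t) of Hopf-Lax maximizers is a nonempty compact subset of ℝ^d, and every y ∈ I(x,t) satisfies y < x, i.e. y_i < x_i for every coordinate i. -/

import Mathlib

open Set Metric

noncomputable section

/-- `g(z) = c·(z₁⋯z_d)^{1/(d+1)}` (used only for `z ≥ 0`, where the product is `≥ 0`). -/
def gfun (c : ℝ) (d : ℕ) (z : Fin d → ℝ) : ℝ := c * (∏ i, z i) ^ (((d : ℝ) + 1)⁻¹)

/-- The set of values over which the Hopf-Lax supremum is taken. -/
def hlSet (c : ℝ) (d : ℕ) (u0 : (Fin d → ℝ) → ℝ) (x : Fin d → ℝ) (t : ℝ) : Set ℝ :=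
  (fun y => u0 y + t * gfun c d (t⁻¹ • (x - y))) '' {y | y ≤ x}

/-- The Hopf-Lax function `u(x,t)`, with `u(x,0) = u₀(x)`. -/
def hlu (c : ℝ) (d : ℕ) (u0 : (Fin d → ℝ) → ℝ) (x : Fin d → ℝ) (t : ℝ) : ℝ :=
  if t = 0 then u0 x else sSup (hlSet c d u0 x t)

/-- The set `I(x,t)` of maximizers in the Hopf-Lax formula. -/
def hlI (c : ℝ) (d : ℕ) (u0 : (Fin d → ℝ) → ℝ) (x : Fin d → ℝ) (t : ℝ) :
    Set (Fin d → ℝ) :=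
  {y | y ≤ x ∧ hlu c d u0 x t = u0 y + t * gfun c d (t⁻¹ • (x - y))}

/-- The decay condition at `−∞`:
for every `b`, `lim_{M→∞} sup { |y|_∞^{-d/(d+1)} u₀(y) : y ≤ b, |y|_∞ ≥ M } = −∞`. -/
def DecayCond (d : ℕ) (u0 : (Fin d → ℝ) → ℝ) : Prop :=
  ∀ b : Fin d → ℝ, ∀ C : ℝ, ∃ M : ℝ, 0 < M ∧ ∀ y : Fin d → ℝ, y ≤ b → M ≤ ‖y‖ →
    u0 y ≤ -C * ‖y‖ ^ ((d : ℝ) / ((d : ℝ) + 1))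

lemma gfun_continuous (c : ℝ) (d : ℕ) : Continuous (gfun c d) := by
  have hq : (0:ℝ) < ((d : ℝ) + 1)⁻¹ := by positivity
  exact continuous_const.mul <|
    (continuous_finset_prod Finset.univ fun i _ => continuous_apply i).rpow_const
      fun z => Or.inr hq.le

/-- For every `x ∈ ℝ^d` and `t > 0`, the set `I(x,t)` of Hopf-Lax maximizers is a
nonempty compact set, and every maximizer `y ∈ I(x,t)` satisfies `y < x` strictly in
every coordinate. -/
theorem hlI_nonempty_compact_strict
    (d : ℕ) (hd : 1 ≤ d) (c : ℝ) (hc : 0 < c)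
    (u0 : (Fin d → ℝ) → ℝ) (hmono : Monotone u0) (hlip : LocallyLipschitz u0)
    (hdecay : DecayCond d u0)
    (x : Fin d → ℝ) (t : ℝ) (ht : 0 < t) :
    (hlI c d u0 x t).Nonempty ∧ IsCompact (hlI c d u0 x t) ∧
      ∀ y ∈ hlI c d u0 x t, ∀ i : Fin d, y i < x i := by
  haveI : Nonempty (Fin d) := ⟨⟨0, hd⟩⟩
  set q : ℝ := ((d : ℝ) + 1)⁻¹ with hqdef
  have hq : 0 < q := by positivity
  set p : ℝ := (d : ℝ) * q with hpdef
  have hp : 0 ≤ p := by positivity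
  have hpq : p + q = 1 := by
    rw [hpdef, hqdef]
    field_simp
  have hdq : (d : ℝ) / ((d : ℝ) + 1) = p := by
    rw [hpdef, hqdef, div_eq_mul_inv]
  set F : (Fin d → ℝ) → ℝ := fun y => u0 y + t * gfun c d (t⁻¹ • (x - y)) with hFdef
  have hFcont : Continuous F :=
    (hlip.continuous).add (continuous_const.mul ((gfun_continuous c d).comp
      (by fun_prop)))
  -- basic facts about the product
  have hprod_nonneg : ∀ y : Fin d → ℝ, y ≤ x → 0 ≤ ∏ i, (t⁻¹ • (x - y)) i := by
    intro y hy
    refine Finset.prod_nonneg fun i _ => ?_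
    have : 0 ≤ x i - y i := sub_nonneg.mpr (hy i)
    simpa using mul_nonneg (inv_nonneg.mpr ht.le) this
  have hFx : F x = u0 x := by
    have : (∏ i, (t⁻¹ • (x - x)) i) = 0 := by
      apply Finset.prod_eq_zero (Finset.mem_univ (⟨0, hd⟩ : Fin d))
      simp
    simp only [hFdef, gfun, this, Real.zero_rpow (ne_of_gt hq : ((d : ℝ) + 1)⁻¹ ≠ 0), mul_zero, add_zero]
  -- upper bound for the g-term when ‖x‖ ≤ ‖y‖
  set C₀ : ℝ := t * c * (2 / t) ^ p with hC0def
  have hC0 : 0 < C₀ := by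
    apply mul_pos (mul_pos ht hc)
    exact Real.rpow_pos_of_pos (by positivity) p
  have hgup : ∀ y : Fin d → ℝ, y ≤ x → ‖x‖ ≤ ‖y‖ → F y ≤ u0 y + C₀ * ‖y‖ ^ p := by
    intro y hy hxy
    have hyn : 0 ≤ ‖y‖ := norm_nonneg y
    have h2t : (0:ℝ) ≤ 2 / t * ‖y‖ := by positivity
    have hprodle : (∏ i, (t⁻¹ • (x - y)) i) ≤ (2 / t * ‖y‖) ^ d := by
      calc (∏ i, (t⁻¹ • (x - y)) i) ≤ ∏ _i : Fin d, (2 / t * ‖y‖) := ?_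
        _ = (2 / t * ‖y‖) ^ d := by simp [Finset.prod_const]
      refine Finset.prod_le_prod (fun i _ => ?_) (fun i _ => ?_)
      · have : 0 ≤ x i - y i := sub_nonneg.mpr (hy i)
        simpa using mul_nonneg (inv_nonneg.mpr ht.le) this
      · have h1 : x i - y i ≤ ‖x‖ + ‖y‖ := by
          have hx1 : x i ≤ ‖x‖ := le_trans (le_abs_self _) (norm_le_pi_norm x i)
          have hy1 : -(y i) ≤ ‖y‖ := le_trans (neg_le_abs _) (norm_le_pi_norm y i)
          linarith
        have h2 : x i - y i ≤ 2 * ‖y‖ := by linarith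
        have : (t⁻¹ • (x - y)) i = t⁻¹ * (x i - y i) := by simp
        rw [this]
        rw [div_mul_eq_mul_div, mul_comm t⁻¹ (x i - y i), ← div_eq_mul_inv]
        gcongr
    have hrpow : (∏ i, (t⁻¹ • (x - y)) i) ^ q ≤ ((2 / t * ‖y‖) ^ d) ^ q :=
      Real.rpow_le_rpow (hprod_nonneg y hy) hprodle hq.le
    have hcast : ((2 / t * ‖y‖) ^ d : ℝ) ^ q = (2 / t) ^ p * ‖y‖ ^ p := by
      rw [← Real.rpow_natCast (2 / t * ‖y‖) d, ← Real.rpow_mul h2t, ← hpdef,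
        Real.mul_rpow (by positivity) hyn]
    have : gfun c d (t⁻¹ • (x - y)) ≤ c * ((2 / t) ^ p * ‖y‖ ^ p) := by
      rw [gfun, ← hqdef]
      refine mul_le_mul_of_nonneg_left ?_ hc.le
      rw [← hcast]; exact hrpow
    have := mul_le_mul_of_nonneg_left this ht.le
    simp only [hFdef]
    rw [hC0def]
    nlinarith [this]
  -- choose the decay constant and radius
  obtain ⟨M, hM, hMy⟩ := hdecay x (C₀ + |u0 x| + 1)
  set R : ℝ := max (max M ‖x‖) 1 with hRdef
  have hRM : M ≤ R := le_trans (le_max_left _ _) (le_max_left _ _)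
  have hRx : ‖x‖ ≤ R := le_trans (le_max_right _ _) (le_max_left _ _)
  have hR1 : (1:ℝ) ≤ R := le_max_right _ _
  -- outside the ball of radius R, F is below u0 x
  have hout : ∀ y : Fin d → ℝ, y ≤ x → R ≤ ‖y‖ → F y < u0 x := by
    intro y hy hRy
    have h1y : (1:ℝ) ≤ ‖y‖ := le_trans hR1 hRy
    have hxy : ‖x‖ ≤ ‖y‖ := le_trans hRx hRy
    have hMyy : M ≤ ‖y‖ := le_trans hRM hRy
    have hub := hgup y hy hxy
    have hdec := hMy y hy hMyy
    rw [hdq] at hdec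
    have hyp1 : (1:ℝ) ≤ ‖y‖ ^ p := by
      calc (1:ℝ) = 1 ^ p := (Real.one_rpow p).symm
      _ ≤ ‖y‖ ^ p := Real.rpow_le_rpow (by norm_num) h1y hp
    have h1 : F y ≤ -(C₀ + |u0 x| + 1) * ‖y‖ ^ p + C₀ * ‖y‖ ^ p := by linarith
    have h2 : -(C₀ + |u0 x| + 1) * ‖y‖ ^ p + C₀ * ‖y‖ ^ p = -(|u0 x| + 1) * ‖y‖ ^ p := by
      ring
    rw [h2] at h1
    have h3 : -(|u0 x| + 1) * ‖y‖ ^ p ≤ -(|u0 x| + 1) := by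
      nlinarith [abs_nonneg (u0 x)]
    have h4 : -(|u0 x| + 1) < u0 x := by
      have := neg_abs_le (u0 x); linarith
    linarith
  -- the compact box K
  set K : Set (Fin d → ℝ) := {y | y ≤ x} ∩ closedBall 0 R with hKdef
  have hclosed_le : IsClosed {y : Fin d → ℝ | y ≤ x} := by
    have : {y : Fin d → ℝ | y ≤ x} = ⋂ i, {y : Fin d → ℝ | y i ≤ x i} := by
      ext y; simp [Pi.le_def]
    rw [this]
    exact isClosed_iInter fun i => isClosed_le (continuous_apply i) continuous_const
  have hKcompact : IsCompact K := by
    apply (isCompact_closedBall (0 : Fin d → ℝ) R).of_isClosed_subset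
    · exact hclosed_le.inter isClosed_closedBall
    · exact inter_subset_right
  have hxK : x ∈ K := by
    constructor
    · exact le_refl x
    · simpa using hRx
  -- maximum over K
  obtain ⟨y₀, hy₀K, hy₀max⟩ := hKcompact.exists_isMaxOn ⟨x, hxK⟩ hFcont.continuousOn
  have hFx_le : u0 x ≤ F y₀ := by
    have h : F x ≤ F y₀ := hy₀max hxK
    rw [hFx] at h; exact h
  have hgreat : IsGreatest (hlSet c d u0 x t) (F y₀) := by
    constructor
    · exact ⟨y₀, hy₀K.1, rfl⟩
    · rintro v ⟨y, hy, rfl⟩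
      by_cases hyR : ‖y‖ ≤ R
      · exact hy₀max ⟨hy, by simpa using hyR⟩
      · exact le_trans (hout y hy (le_of_not_ge hyR)).le hFx_le
  have hlu_eq : hlu c d u0 x t = F y₀ := by
    rw [hlu, if_neg (ne_of_gt ht)]
    exact hgreat.csSup_eq
  have hI_eq : hlI c d u0 x t = {y | y ≤ x ∧ F y₀ = F y} := by
    ext y; simp only [hlI, mem_setOf_eq, hlu_eq, hFdef]
  -- I ⊆ K
  have hIK : hlI c d u0 x t ⊆ K := by
    intro y hy
    rw [hI_eq] at hy
    refine ⟨hy.1, ?_⟩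
    by_contra hyR
    have hRy : R ≤ ‖y‖ := by
      simp only [mem_closedBall, dist_zero_right] at hyR
      linarith [le_of_not_ge hyR]
    have := hout y hy.1 hRy
    rw [← hy.2] at this
    linarith
  -- I is closed
  have hIclosed : IsClosed (hlI c d u0 x t) := by
    rw [hI_eq]
    have : {y : Fin d → ℝ | y ≤ x ∧ F y₀ = F y}
        = {y | y ≤ x} ∩ F ⁻¹' {F y₀} := by
      ext y
      simp only [mem_setOf_eq, mem_inter_iff, mem_preimage, mem_singleton_iff]
      tauto
    rw [this]
    exact hclosed_le.inter (isClosed_singleton.preimage hFcont)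
  refine ⟨⟨y₀, by rw [hI_eq]; exact ⟨hy₀K.1, rfl⟩⟩,
    hKcompact.of_isClosed_subset hIclosed hIK, ?_⟩
  -- strictness
  intro y hyI i
  rw [hI_eq] at hyI
  obtain ⟨hyx, hyF⟩ := hyI
  by_contra hcon
  have hyi : y i = x i := le_antisymm (hyx i) (le_of_not_gt hcon)
  -- at y, the g-term vanishes
  have hFy : F y = u0 y := by
    have : (∏ j, (t⁻¹ • (x - y)) j) = 0 := by
      apply Finset.prod_eq_zero (Finset.mem_univ i)
      simp [hyi]
    simp only [hFdef, gfun, this, Real.zero_rpow (ne_of_gt hq : ((d : ℝ) + 1)⁻¹ ≠ 0), mul_zero, add_zero]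
  -- local Lipschitz data at y
  obtain ⟨L, s, hs, hL⟩ := hlip y
  obtain ⟨r, hr, hball⟩ := Metric.mem_nhds_iff.mp hs
  set ε₀ : ℝ := (c * t ^ q / ((L : ℝ) + 1)) ^ q⁻¹ with hε₀def
  have hε₀ : 0 < ε₀ := Real.rpow_pos_of_pos (by positivity) _
  set ε : ℝ := min (r / 2) ε₀ with hεdef
  have hε : 0 < ε := lt_min (by linarith) hε₀
  set y' : Fin d → ℝ := y - fun _ => ε with hy'def
  have hy'x : y' ≤ x := fun j => by
    have : y' j = y j - ε := rfl
    rw [this]; linarith [hyx j]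
  have hdisty : dist y' y = ε := by
    rw [dist_eq_norm]
    have : y' - y = fun _ : Fin d => -ε := by
      funext j; simp [hy'def]
    rw [this, pi_norm_const]
    simp [abs_of_pos hε]
  have hy's : y' ∈ s := hball (by rw [mem_ball, hdisty]; linarith [min_le_left (r/2) ε₀])
  have hys : y ∈ s := mem_of_mem_nhds hs
  have hlipest : u0 y - u0 y' ≤ (L : ℝ) * ε := by
    have := hL.dist_le_mul y hys y' hy's
    rw [dist_comm y' y] at hdisty
    rw [hdisty, Real.dist_eq] at this
    have := le_trans (le_abs_self _) this
    linarith
  -- lower bound for the g-term at y'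
  have hεt : (0:ℝ) ≤ ε / t := by positivity
  have hglow : t * c * (ε / t) ^ p ≤ t * gfun c d (t⁻¹ • (x - y')) := by
    have hprodge : (ε / t) ^ d ≤ ∏ j, (t⁻¹ • (x - y')) j := by
      calc ((ε / t) ^ d : ℝ) = ∏ _j : Fin d, (ε / t) := by simp [Finset.prod_const, div_pow]
        _ ≤ ∏ j, (t⁻¹ • (x - y')) j := ?_
      refine Finset.prod_le_prod (fun j _ => hεt) (fun j _ => ?_)
      have h1 : (t⁻¹ • (x - y')) j = t⁻¹ * (x j - (y j - ε)) := by simp [hy'def]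
      rw [h1, div_eq_mul_inv, mul_comm (ε) t⁻¹]
      have : ε ≤ x j - (y j - ε) := by linarith [hyx j]
      exact mul_le_mul_of_nonneg_left this (inv_nonneg.mpr ht.le)
    have hrpow : ((ε / t) ^ d : ℝ) ^ q ≤ (∏ j, (t⁻¹ • (x - y')) j) ^ q :=
      Real.rpow_le_rpow (by positivity) hprodge hq.le
    have hcast : ((ε / t) ^ d : ℝ) ^ q = (ε / t) ^ p := by
      rw [← Real.rpow_natCast (ε / t) d, ← Real.rpow_mul hεt, ← hpdef]
    rw [hcast] at hrpow
    rw [gfun, ← hqdef, mul_assoc]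
    exact mul_le_mul_of_nonneg_left (mul_le_mul_of_nonneg_left hrpow hc.le) ht.le
  -- the key strict inequality: t*c*(ε/t)^p > L*ε
  have hkey : (L : ℝ) * ε < t * c * (ε / t) ^ p := by
    have hεq : ε ^ q ≤ c * t ^ q / ((L : ℝ) + 1) := by
      calc ε ^ q ≤ ε₀ ^ q := Real.rpow_le_rpow hε.le (min_le_right _ _) hq.le
      _ = c * t ^ q / ((L : ℝ) + 1) := Real.rpow_inv_rpow (by positivity) (ne_of_gt hq)
    have hεpq : ε ^ p * ε ^ q = ε := by
      rw [← Real.rpow_add hε, hpq, Real.rpow_one]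
    have htpq : t ^ p * t ^ q = t := by
      rw [← Real.rpow_add ht, hpq, Real.rpow_one]
    have hεp : (0:ℝ) < ε ^ p := Real.rpow_pos_of_pos hε p
    have hdiv : (ε / t) ^ p = ε ^ p / t ^ p := Real.div_rpow hε.le ht.le p
    have htp : (0:ℝ) < t ^ p := Real.rpow_pos_of_pos ht p
    have h1 : ((L : ℝ) + 1) * ε ≤ t * c * (ε / t) ^ p := by
      have h2 : ((L : ℝ) + 1) * ε ^ q ≤ c * t ^ q := by
        rw [le_div_iff₀ (by positivity : (0:ℝ) < (L : ℝ) + 1)] at hεq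
        calc ((L : ℝ) + 1) * ε ^ q = ε ^ q * ((L : ℝ) + 1) := mul_comm _ _
          _ ≤ c * t ^ q := hεq
      have h3 := mul_le_mul_of_nonneg_right h2 hεp.le
      -- ((L+1) * ε^q) * ε^p ≤ (c * t^q) * ε^p
      have h4 : ((L : ℝ) + 1) * ε ^ q * ε ^ p = ((L : ℝ) + 1) * ε := by
        rw [mul_assoc, mul_comm (ε ^ q) (ε ^ p), hεpq]
      have htdiv : t / t ^ p = t ^ q := by
        rw [div_eq_iff (ne_of_gt htp)]
        linarith [htpq]
      have h5 : c * t ^ q * ε ^ p = t * c * (ε / t) ^ p := by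
        rw [hdiv, show t * c * (ε ^ p / t ^ p) = c * (t / t ^ p) * ε ^ p from by ring,
          htdiv]
      rw [h4, h5] at h3
      exact h3
    linarith [h1, hε]
  -- contradiction: F y' > F y = sup
  have hFy' : F y < F y' := by
    have hFy'eq : F y' = u0 y' + t * gfun c d (t⁻¹ • (x - y')) := by
      simp only [hFdef]
    rw [hFy, hFy'eq]
    linarith [hlipest, hkey, hglow]
  have : F y' ≤ F y₀ := hgreat.2 ⟨y', hy'x, rfl⟩
  rw [hyF] at this
  linarith

end
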